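/- Under the condition p < M(q r + (1-q) r'), the Lyapunov function θ(x) = x satisfies the Foster–Lyapunov conditions for the induced chain: (i) inf_x θ(x) > −∞; (ii) Σ_y p_{xy} θ(y) < ∞ for x in the finite set {0,1,…,M−1}; and (iii) there exists ε > 0 such that Σ_y p_{xy}(θ(y) − θ(x)) ≤ −ε for all x ≥ M. Consequently, the chain is positive recurrent. -/

import Mathlib

open Finset

lemma binom_sum (t : ℝ) (n : ℕ) :
    ∑ d ∈ range (n+1), (n.choose d : ℝ) * (t ^ d * (1 - t) ^ (n - d)) = 1 := by
  have h := add_pow t (1 - t) n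
  simp only [add_sub_cancel, one_pow] at h
  conv_rhs => rw [h]
  exact Finset.sum_congr rfl fun d _ => by ring


/-- Probability that exactly `d` of the `M` mini-slot departures occur, under
the mixture of `Bin(M,r)` (jamming, prob. `q`) and `Bin(M,r')` (no jamming). -/
noncomputable def mixP (M : ℕ) (q r r' : ℝ) (d : ℕ) : ℝ :=
  (M.choose d : ℝ) * (r ^ d * (1 - r) ^ (M - d) * q + r' ^ d * (1 - r') ^ (M - d) * (1 - q))

/-- Departure distribution truncated at `min x M` when `x` users are present. -/
noncomputable def Pd (M : ℕ) (q r r' : ℝ) (x d : ℕ) : ℝ :=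
  if d < min x M then mixP M q r r' d
  else if d = min x M then ∑ e ∈ Finset.Icc (min x M) M, mixP M q r r' e
  else 0

/-- Transition kernel of the number of users at a BS under a stationary
admission policy `u`: departures `D` with law `Pd`, and an arrival admitted
(`u x = 1`) with probability `p`. -/
noncomputable def transP (M : ℕ) (q r r' p : ℝ) (u : ℕ → ℕ) (x y : ℕ) : ℝ :=
  ∑ d ∈ Finset.range (min x M + 1),
    Pd M q r r' x d *
      (p * (if y = x - d + u x then 1 else 0)
        + (1 - p) * (if y = x - d then 1 else 0))


variable {M : ℕ} {q r r' : ℝ}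

lemma mixP_nonneg (hq0 : 0 ≤ q) (hq1 : q ≤ 1) (hr0 : 0 ≤ r) (hr1 : r ≤ 1)
    (hr'0 : 0 ≤ r') (hr'1 : r' ≤ 1) (d : ℕ) : 0 ≤ mixP M q r r' d := by
  unfold mixP
  have : (0:ℝ) ≤ (M.choose d : ℝ) := by positivity
  apply mul_nonneg this
  apply add_nonneg
  · exact mul_nonneg (mul_nonneg (pow_nonneg hr0 _) (pow_nonneg (by linarith) _)) hq0
  · exact mul_nonneg (mul_nonneg (pow_nonneg hr'0 _) (pow_nonneg (by linarith) _)) (by linarith)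

lemma mixP_sum : ∑ d ∈ range (M+1), mixP M q r r' d = 1 := by
  unfold mixP
  have h1 := binom_sum r M
  have h2 := binom_sum r' M
  have : ∑ d ∈ range (M+1), (M.choose d : ℝ) *
      (r ^ d * (1 - r) ^ (M - d) * q + r' ^ d * (1 - r') ^ (M - d) * (1 - q))
      = (∑ d ∈ range (M+1), (M.choose d : ℝ) * (r ^ d * (1 - r) ^ (M - d))) * q
        + (∑ d ∈ range (M+1), (M.choose d : ℝ) * (r' ^ d * (1 - r') ^ (M - d))) * (1-q) := by
    rw [Finset.sum_mul, Finset.sum_mul, ← Finset.sum_add_distrib]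
    exact Finset.sum_congr rfl fun d _ => by ring
  rw [this, h1, h2]; ring

lemma binom_mean (t : ℝ) (m : ℕ) :
    ∑ d ∈ range (m+2), (d : ℝ) * ((m+1).choose d : ℝ) * (t ^ d * (1 - t) ^ (m+1-d))
      = (m+1 : ℝ) * t := by
  rw [Finset.sum_range_succ']
  simp only [Nat.cast_zero, zero_mul]
  have key : ∀ i ∈ range (m+1),
      ((i+1 : ℕ) : ℝ) * ((m+1).choose (i+1) : ℝ) * (t ^ (i+1) * (1 - t) ^ (m+1-(i+1)))
        = ((m+1:ℝ) * t) * ((m.choose i : ℝ) * (t ^ i * (1 - t) ^ (m - i))) := by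
    intro i hi
    have h : (m+1) * m.choose i = (m+1).choose (i+1) * (i+1) := Nat.add_one_mul_choose_eq m i
    have h' : ((m:ℝ)+1) * (m.choose i : ℝ) = ((m+1).choose (i+1) : ℝ) * ((i:ℝ)+1) := by
      exact_mod_cast congrArg (Nat.cast : ℕ → ℝ) h
    have hs : m + 1 - (i+1) = m - i := by omega
    rw [hs]
    push_cast
    calc (↑i + 1) * ↑((m + 1).choose (i + 1)) * (t ^ (i+1) * (1 - t) ^ (m - i))
        = (((m+1).choose (i+1) : ℝ) * ((i:ℝ)+1)) * (t ^ (i+1) * (1 - t) ^ (m - i)) := by ring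
      _ = ((m:ℝ)+1) * (m.choose i : ℝ) * (t ^ (i+1) * (1 - t) ^ (m - i)) := by rw [h']
      _ = (↑m + 1) * t * (↑(m.choose i) * (t ^ i * (1 - t) ^ (m - i))) := by ring
  rw [Finset.sum_congr rfl key, ← Finset.mul_sum, binom_sum t m]
  ring

lemma mixP_mean (hM : 1 ≤ M) :
    ∑ d ∈ range (M+1), (d:ℝ) * mixP M q r r' d = (M:ℝ) * (q * r + (1 - q) * r') := by
  obtain ⟨m, rfl⟩ : ∃ m, M = m + 1 := ⟨M - 1, by omega⟩
  unfold mixP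
  have h1 := binom_mean r m
  have h2 := binom_mean r' m
  have : ∑ d ∈ range (m+1+1), (d:ℝ) * ((((m+1).choose d : ℕ)):ℝ) *
      (r ^ d * (1 - r) ^ (m+1 - d) * q + r' ^ d * (1 - r') ^ (m+1 - d) * (1 - q))
      = (∑ d ∈ range (m+2), (d:ℝ) * ((m+1).choose d : ℝ) * (r ^ d * (1 - r) ^ (m+1 - d))) * q
        + (∑ d ∈ range (m+2), (d:ℝ) * ((m+1).choose d : ℝ) * (r' ^ d * (1 - r') ^ (m+1 - d))) * (1-q) := by
    rw [Finset.sum_mul, Finset.sum_mul, ← Finset.sum_add_distrib]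
    exact Finset.sum_congr rfl fun d _ => by ring
  simp only [← mul_assoc]
  rw [this, h1, h2]
  push_cast
  ring

lemma Pd_nonneg (hq0 : 0 ≤ q) (hq1 : q ≤ 1) (hr0 : 0 ≤ r) (hr1 : r ≤ 1)
    (hr'0 : 0 ≤ r') (hr'1 : r' ≤ 1) (x d : ℕ) : 0 ≤ Pd M q r r' x d := by
  unfold Pd
  split_ifs with h1 h2
  · exact mixP_nonneg hq0 hq1 hr0 hr1 hr'0 hr'1 d
  · exact Finset.sum_nonneg fun e _ => mixP_nonneg hq0 hq1 hr0 hr1 hr'0 hr'1 e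
  · exact le_refl _

lemma Pd_sum (x : ℕ) : ∑ d ∈ range (min x M + 1), Pd M q r r' x d = 1 := by
  set m := min x M with hm
  have hmM : m ≤ M := min_le_right _ _
  rw [Finset.sum_range_succ]
  have h1 : ∀ d ∈ range m, Pd M q r r' x d = mixP M q r r' d := by
    intro d hd
    rw [Finset.mem_range] at hd
    unfold Pd
    rw [if_pos (by omega)]
  have h2 : Pd M q r r' x m = ∑ e ∈ Finset.Icc m M, mixP M q r r' e := by
    unfold Pd
    rw [if_neg (by omega), if_pos rfl]
  rw [Finset.sum_congr rfl h1, h2]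
  have : Finset.Icc m M = Finset.Ico m (M+1) := by rw [Finset.Ico_add_one_right_eq_Icc]
  rw [this, Finset.range_eq_Ico]
  rw [Finset.sum_Ico_consecutive _ (Nat.zero_le m) (by omega)]
  rw [← Finset.range_eq_Ico]
  exact mixP_sum

lemma Pd_eq_mixP (hx : M ≤ x) (d : ℕ) (hd : d ≤ M) :
    Pd M q r r' x d = mixP M q r r' d := by
  have hmin : min x M = M := min_eq_right hx
  unfold Pd
  rw [hmin]
  rcases lt_or_eq_of_le hd with h | h
  · rw [if_pos h]
  · rw [if_neg (by omega), if_pos h, h, Finset.Icc_self, Finset.sum_singleton]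

lemma Pd_mean (hM : 1 ≤ M) (x : ℕ) (hx : M ≤ x) :
    ∑ d ∈ range (M+1), (d:ℝ) * Pd M q r r' x d = (M:ℝ) * (q * r + (1 - q) * r') := by
  rw [Finset.sum_congr rfl fun d hd => by
    rw [Pd_eq_mixP hx d (by simpa [Nat.lt_succ_iff] using Finset.mem_range.mp hd)]]
  exact mixP_mean hM

lemma Pd_eq_zero {x d : ℕ} (hd : min x M < d) : Pd M q r r' x d = 0 := by
  unfold Pd
  rw [if_neg (by omega), if_neg (by omega)]

variable {p : ℝ} {u : ℕ → ℕ}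

lemma transP_key (hu : ∀ x, u x ≤ 1) (x : ℕ) (g : ℕ → ℝ) :
    ∑ y ∈ range (x+2), transP M q r r' p u x y * g y
      = ∑ d ∈ range (min x M + 1),
          Pd M q r r' x d * (p * g (x - d + u x) + (1-p) * g (x - d)) := by
  unfold transP
  simp only [Finset.sum_mul]
  rw [Finset.sum_comm]
  refine Finset.sum_congr rfl fun d hd => ?_
  rw [Finset.mem_range] at hd
  have hdm : d ≤ min x M := by omega
  have h1 : x - d + u x < x + 2 := by have := hu x; omega
  have h2 : x - d < x + 2 := by omega
  have expand : ∀ y, Pd M q r r' x d *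
      (p * (if y = x - d + u x then (1:ℝ) else 0) + (1-p) * (if y = x - d then 1 else 0)) * g y
      = Pd M q r r' x d * p * (if y = x - d + u x then g y else 0)
        + Pd M q r r' x d * (1-p) * (if y = x - d then g y else 0) := by
    intro y; split_ifs <;> ring
  rw [Finset.sum_congr rfl fun y _ => expand y, Finset.sum_add_distrib,
    ← Finset.mul_sum, ← Finset.mul_sum, Finset.sum_ite_eq' , Finset.sum_ite_eq',
    if_pos (Finset.mem_range.mpr h1), if_pos (Finset.mem_range.mpr h2)]
  ring

lemma transP_nonneg (hq0 : 0 ≤ q) (hq1 : q ≤ 1) (hr0 : 0 ≤ r) (hr1 : r ≤ 1)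
    (hr'0 : 0 ≤ r') (hr'1 : r' ≤ 1) (hp0 : 0 ≤ p) (hp1 : p ≤ 1) (x y : ℕ) :
    0 ≤ transP M q r r' p u x y := by
  unfold transP
  apply Finset.sum_nonneg
  intro d _
  apply mul_nonneg (Pd_nonneg hq0 hq1 hr0 hr1 hr'0 hr'1 x d)
  apply add_nonneg
  · apply mul_nonneg hp0; split_ifs <;> norm_num
  · apply mul_nonneg (by linarith); split_ifs <;> norm_num

lemma transP_eq_zero_right (hu : ∀ x, u x ≤ 1) {x y : ℕ} (h : x + 1 < y) :
    transP M q r r' p u x y = 0 := by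
  unfold transP
  apply Finset.sum_eq_zero
  intro d hd
  rw [Finset.mem_range] at hd
  have h1 : y ≠ x - d + u x := by have := hu x; omega
  have h2 : y ≠ x - d := by omega
  rw [if_neg h1, if_neg h2]
  ring

lemma transP_eq_zero_left {x y : ℕ} (h : y + M < x) :
    transP M q r r' p u x y = 0 := by
  unfold transP
  apply Finset.sum_eq_zero
  intro d hd
  rw [Finset.mem_range] at hd
  have hdm : d ≤ min x M := by omega
  have hdM : d ≤ M := le_trans hdm (min_le_right _ _)
  have h1 : y ≠ x - d + u x := by omega
  have h2 : y ≠ x - d := by omega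
  rw [if_neg h1, if_neg h2]
  ring

lemma transP_mass (hu : ∀ x, u x ≤ 1) (x : ℕ) :
    ∑ y ∈ range (x+2), transP M q r r' p u x y = 1 := by
  have h := transP_key (M := M) (q := q) (r := r) (r' := r') (p := p) hu x (fun _ => 1)
  simp only [mul_one] at h
  rw [h, Finset.sum_congr rfl (fun d _ => by ring :
    ∀ d ∈ range (min x M + 1), Pd M q r r' x d * (p + (1-p)) = Pd M q r r' x d)]
  exact Pd_sum x

lemma transP_drift (hu : ∀ x, u x ≤ 1) (hM : 1 ≤ M) {x : ℕ} (hx : M ≤ x) :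
    ∑ y ∈ range (x+2), transP M q r r' p u x y * ((y:ℝ) - (x:ℝ))
      = p * (u x : ℝ) - (M:ℝ) * (q * r + (1 - q) * r') := by
  rw [transP_key hu x (fun y => (y:ℝ) - (x:ℝ))]
  have hmin : min x M = M := min_eq_right hx
  rw [hmin]
  have hcongr : ∀ d ∈ range (M + 1),
      Pd M q r r' x d * (p * (((x - d + u x : ℕ):ℝ) - (x:ℝ)) + (1-p) * (((x - d : ℕ):ℝ) - (x:ℝ)))
        = (p * (u x : ℝ)) * Pd M q r r' x d - (d:ℝ) * Pd M q r r' x d := by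
    intro d hd
    rw [Finset.mem_range] at hd
    have hdx : d ≤ x := by omega
    have c1 : ((x - d + u x : ℕ):ℝ) = (x:ℝ) - (d:ℝ) + (u x : ℝ) := by
      push_cast [Nat.cast_sub hdx]; ring
    have c2 : ((x - d : ℕ):ℝ) = (x:ℝ) - (d:ℝ) := by push_cast [Nat.cast_sub hdx]; ring
    rw [c1, c2]; ring
  rw [Finset.sum_congr rfl hcongr, Finset.sum_sub_distrib, ← Finset.mul_sum]
  have h1 : ∑ d ∈ range (M+1), Pd M q r r' x d = 1 := by
    have := Pd_sum (M := M) (q := q) (r := r) (r' := r') x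
    rwa [hmin] at this
  rw [h1, Pd_mean hM x hx]
  ring

set_option maxHeartbeats 2000000 in
lemma transP_sq (hq0 : 0 ≤ q) (hq1 : q ≤ 1) (hr0 : 0 ≤ r) (hr1 : r ≤ 1)
    (hr'0 : 0 ≤ r') (hr'1 : r' ≤ 1) (hp0 : 0 ≤ p) (hp1 : p ≤ 1)
    (hu : ∀ x, u x ≤ 1) (hM : 1 ≤ M)
    (hstab : p < (M : ℝ) * (q * r + (1 - q) * r')) (x : ℕ) :
    ∑ y ∈ range (x+2), transP M q r r' p u x y * ((y:ℝ))^2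
      ≤ (x:ℝ)^2 - 2 * ((M:ℝ) * (q * r + (1 - q) * r') - p) * (x:ℝ)
        + ((M:ℝ)^2 + 2*(M:ℝ) + 2*((M:ℝ) * (q * r + (1 - q) * r') - p)*(M:ℝ)) := by
  have hε0 : 0 < (M:ℝ) * (q * r + (1 - q) * r') - p := by linarith
  rw [transP_key hu x (fun y => ((y:ℝ))^2)]
  have hM1 : (1:ℝ) ≤ (M:ℝ) := by exact_mod_cast hM
  have hux0 : (0:ℝ) ≤ (u x : ℝ) := Nat.cast_nonneg _
  have hux1 : (u x : ℝ) ≤ 1 := by exact_mod_cast hu x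
  rcases le_or_gt M x with hx | hx
  · -- x ≥ M
    have hmin : min x M = M := min_eq_right hx
    rw [hmin]
    have hbound : ∀ d ∈ range (M+1),
        Pd M q r r' x d * (p * (((x - d + u x : ℕ):ℝ))^2 + (1-p) * (((x - d : ℕ):ℝ))^2)
          ≤ Pd M q r r' x d * ((x:ℝ)^2 + 2*(x:ℝ)*(p*(u x : ℝ)) + (M:ℝ)^2)
            - 2*(x:ℝ) * ((d:ℝ) * Pd M q r r' x d) := by
      intro d hd
      rw [Finset.mem_range] at hd
      have hdM : d ≤ M := by omega
      have hdx : d ≤ x := by omega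
      have hdR : (d:ℝ) ≤ (M:ℝ) := by exact_mod_cast hdM
      have hd0 : (0:ℝ) ≤ (d:ℝ) := Nat.cast_nonneg _
      have c1 : ((x - d + u x : ℕ):ℝ) = (x:ℝ) - (d:ℝ) + (u x : ℝ) := by
        push_cast [Nat.cast_sub hdx]; ring
      have c2 : ((x - d : ℕ):ℝ) = (x:ℝ) - (d:ℝ) := by push_cast [Nat.cast_sub hdx]; ring
      rw [c1, c2]
      have hPd := Pd_nonneg hq0 hq1 hr0 hr1 hr'0 hr'1 (M := M) x d
      have hsq : ((u x : ℝ) - (d:ℝ))^2 ≤ (M:ℝ)^2 := by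
        nlinarith [mul_nonneg (by linarith : (0:ℝ) ≤ (M:ℝ) - (u x:ℝ) + (d:ℝ))
          (by linarith : (0:ℝ) ≤ (M:ℝ) + (u x:ℝ) - (d:ℝ))]
      have hd2 : (d:ℝ)^2 ≤ (M:ℝ)^2 := by nlinarith
      have hb1 : p*((u x:ℝ)-(d:ℝ))^2 ≤ p*(M:ℝ)^2 := mul_le_mul_of_nonneg_left hsq hp0
      have hb2 : (1-p)*(d:ℝ)^2 ≤ (1-p)*(M:ℝ)^2 :=
        mul_le_mul_of_nonneg_left hd2 (by linarith)
      have inner : p * ((x:ℝ) - (d:ℝ) + (u x : ℝ))^2 + (1-p) * ((x:ℝ) - (d:ℝ))^2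
          ≤ (x:ℝ)^2 + 2*(x:ℝ)*(p*(u x : ℝ)) + (M:ℝ)^2 - 2*(x:ℝ)*(d:ℝ) := by
        nlinarith [hb1, hb2]
      calc Pd M q r r' x d * (p * ((x:ℝ) - (d:ℝ) + (u x : ℝ))^2 + (1-p) * ((x:ℝ) - (d:ℝ))^2)
          ≤ Pd M q r r' x d * ((x:ℝ)^2 + 2*(x:ℝ)*(p*(u x : ℝ)) + (M:ℝ)^2 - 2*(x:ℝ)*(d:ℝ)) :=
            mul_le_mul_of_nonneg_left inner hPd
        _ = Pd M q r r' x d * ((x:ℝ)^2 + 2*(x:ℝ)*(p*(u x : ℝ)) + (M:ℝ)^2)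
            - 2*(x:ℝ) * ((d:ℝ) * Pd M q r r' x d) := by ring
    have hs := Finset.sum_le_sum hbound
    rw [Finset.sum_sub_distrib, ← Finset.sum_mul, ← Finset.mul_sum] at hs
    have h1 : ∑ d ∈ range (M+1), Pd M q r r' x d = 1 := by
      have := Pd_sum (M := M) (q := q) (r := r) (r' := r') x
      rwa [hmin] at this
    rw [h1, Pd_mean hM x hx, one_mul] at hs
    have hx0 : (0:ℝ) ≤ (x:ℝ) := Nat.cast_nonneg _
    refine le_trans hs ?_
    have f1 : p * (u x : ℝ) ≤ p := mul_le_of_le_one_right hp0 hux1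
    have f2 : 2*(x:ℝ)*(p*(u x:ℝ)) ≤ 2*(x:ℝ)*p :=
      mul_le_mul_of_nonneg_left f1 (by positivity)
    have f3 : 0 ≤ ((M:ℝ) * (q * r + (1 - q) * r') - p) * (M:ℝ) :=
      mul_nonneg (le_of_lt hε0) (Nat.cast_nonneg _)
    linarith [f2, f3, hM1]
  · -- x < M
    have hmin : min x M = x := min_eq_left (by omega)
    rw [hmin]
    have hbound : ∀ d ∈ range (x+1),
        Pd M q r r' x d * (p * (((x - d + u x : ℕ):ℝ))^2 + (1-p) * (((x - d : ℕ):ℝ))^2)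
          ≤ Pd M q r r' x d * ((x:ℝ)^2 + 2*(x:ℝ) + (M:ℝ)^2) := by
      intro d hd
      rw [Finset.mem_range] at hd
      have hdx : d ≤ x := by omega
      have hd0 : (0:ℝ) ≤ (d:ℝ) := Nat.cast_nonneg _
      have hdR : (d:ℝ) ≤ (x:ℝ) := by exact_mod_cast hdx
      have hx0 : (0:ℝ) ≤ (x:ℝ) := Nat.cast_nonneg _
      have c1 : ((x - d + u x : ℕ):ℝ) = (x:ℝ) - (d:ℝ) + (u x : ℝ) := by
        push_cast [Nat.cast_sub hdx]; ring
      have c2 : ((x - d : ℕ):ℝ) = (x:ℝ) - (d:ℝ) := by push_cast [Nat.cast_sub hdx]; ring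
      rw [c1, c2]
      have hPd := Pd_nonneg hq0 hq1 hr0 hr1 hr'0 hr'1 (M := M) x d
      apply mul_le_mul_of_nonneg_left _ hPd
      have e1 : ((x:ℝ)-(d:ℝ)+(u x:ℝ))^2 ≤ ((x:ℝ)+1)^2 := by nlinarith
      have e2 : ((x:ℝ)-(d:ℝ))^2 ≤ (x:ℝ)^2 := by nlinarith
      have g1 : p*((x:ℝ)-(d:ℝ)+(u x:ℝ))^2 ≤ p*((x:ℝ)+1)^2 := mul_le_mul_of_nonneg_left e1 hp0
      have g2 : (1-p)*((x:ℝ)-(d:ℝ))^2 ≤ (1-p)*(x:ℝ)^2 :=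
        mul_le_mul_of_nonneg_left e2 (by linarith)
      nlinarith [g1, g2, hM1]
    have hs := Finset.sum_le_sum hbound
    rw [← Finset.sum_mul] at hs
    have h1 : ∑ d ∈ range (x+1), Pd M q r r' x d = 1 := by
      have := Pd_sum (M := M) (q := q) (r := r) (r' := r') x
      rwa [hmin] at this
    rw [h1, one_mul] at hs
    have hxM : (x:ℝ) ≤ (M:ℝ) := by exact_mod_cast le_of_lt hx
    have hx0 : (0:ℝ) ≤ (x:ℝ) := Nat.cast_nonneg _
    refine le_trans hs ?_
    have f1 : ((M:ℝ) * (q * r + (1 - q) * r') - p) * (x:ℝ)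
        ≤ ((M:ℝ) * (q * r + (1 - q) * r') - p) * (M:ℝ) :=
      mul_le_mul_of_nonneg_left hxM (le_of_lt hε0)
    linarith [f1]

noncomputable def muSeq (M : ℕ) (q r r' p : ℝ) (u : ℕ → ℕ) : ℕ → ℕ → ℝ
  | 0 => fun y => if y = 0 then 1 else 0
  | (n+1) => fun y => ∑ x ∈ range (n+1), muSeq M q r r' p u n x * transP M q r r' p u x y

section MuSeq

variable (hq0 : 0 ≤ q) (hq1 : q ≤ 1) (hr0 : 0 ≤ r) (hr1 : r ≤ 1)
  (hr'0 : 0 ≤ r') (hr'1 : r' ≤ 1) (hp0 : 0 ≤ p) (hp1 : p ≤ 1)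
  (hu : ∀ x, u x ≤ 1) (hM : 1 ≤ M)

include hq0 hq1 hr0 hr1 hr'0 hr'1 hp0 hp1 in
lemma muSeq_nonneg : ∀ n y, 0 ≤ muSeq M q r r' p u n y := by
  intro n
  induction n with
  | zero => intro y; unfold muSeq; split_ifs <;> norm_num
  | succ n ih =>
    intro y
    unfold muSeq
    exact Finset.sum_nonneg fun x _ => mul_nonneg (ih x)
      (transP_nonneg hq0 hq1 hr0 hr1 hr'0 hr'1 hp0 hp1 x y)

include hu in
lemma muSeq_eq_zero : ∀ n y, n < y → muSeq M q r r' p u n y = 0 := by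
  intro n
  induction n with
  | zero => intro y hy; unfold muSeq; rw [if_neg (by omega)]
  | succ n ih =>
    intro y hy
    unfold muSeq
    apply Finset.sum_eq_zero
    intro x hx
    rw [Finset.mem_range] at hx
    rw [transP_eq_zero_right hu (by omega)]
    ring

include hu in
lemma muSeq_mass : ∀ n, ∑ y ∈ range (n+1), muSeq M q r r' p u n y = 1 := by
  intro n
  induction n with
  | zero => simp [muSeq]
  | succ n ih =>
    show ∑ y ∈ range (n+2), ∑ x ∈ range (n+1),
        muSeq M q r r' p u n x * transP M q r r' p u x y = 1
    rw [Finset.sum_comm]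
    have inner : ∀ x ∈ range (n+1),
        ∑ y ∈ range (n+2), muSeq M q r r' p u n x * transP M q r r' p u x y
          = muSeq M q r r' p u n x := by
      intro x hx
      rw [Finset.mem_range] at hx
      rw [← Finset.mul_sum]
      have hsub : range (x+2) ⊆ range (n+2) := by
        apply Finset.range_subset_range.mpr; omega
      rw [← Finset.sum_subset hsub (fun y _ hy => by
        rw [Finset.mem_range] at hy
        exact transP_eq_zero_right hu (by omega))]
      rw [transP_mass hu x, mul_one]
    rw [Finset.sum_congr rfl inner, ih]

include hq0 hq1 hr0 hr1 hr'0 hr'1 hp0 hp1 hu in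
lemma muSeq_le_one : ∀ n y, muSeq M q r r' p u n y ≤ 1 := by
  intro n y
  rcases le_or_gt y n with h | h
  · have := muSeq_mass (M := M) (q := q) (r := r) (r' := r') (p := p) (u := u) hu n
    calc muSeq M q r r' p u n y
        ≤ ∑ z ∈ range (n+1), muSeq M q r r' p u n z :=
          Finset.single_le_sum (fun z _ =>
            muSeq_nonneg hq0 hq1 hr0 hr1 hr'0 hr'1 hp0 hp1 n z)
            (Finset.mem_range.mpr (by omega))
      _ = 1 := this
  · rw [muSeq_eq_zero hu n y h]; norm_num

end MuSeq

section MuSeq2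

variable (hq0 : 0 ≤ q) (hq1 : q ≤ 1) (hr0 : 0 ≤ r) (hr1 : r ≤ 1)
  (hr'0 : 0 ≤ r') (hr'1 : r' ≤ 1) (hp0 : 0 ≤ p) (hp1 : p ≤ 1)
  (hu : ∀ x, u x ≤ 1) (hM : 1 ≤ M)
  (hstab : p < (M : ℝ) * (q * r + (1 - q) * r'))

include hq0 hq1 hr0 hr1 hr'0 hr'1 hp0 hp1 hu hM hstab in
lemma muSeq_sq_rec (n : ℕ) :
    ∑ y ∈ range (n+2), ((y:ℝ))^2 * muSeq M q r r' p u (n+1) y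
      ≤ (∑ y ∈ range (n+1), ((y:ℝ))^2 * muSeq M q r r' p u n y)
        - 2 * ((M:ℝ) * (q * r + (1 - q) * r') - p)
            * (∑ y ∈ range (n+1), (y:ℝ) * muSeq M q r r' p u n y)
        + ((M:ℝ)^2 + 2*(M:ℝ) + 2*((M:ℝ) * (q * r + (1 - q) * r') - p)*(M:ℝ)) := by
  have step1 : ∑ y ∈ range (n+2), ((y:ℝ))^2 * muSeq M q r r' p u (n+1) y
      = ∑ x ∈ range (n+1), muSeq M q r r' p u n x *
          (∑ y ∈ range (x+2), transP M q r r' p u x y * ((y:ℝ))^2) := by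
    show ∑ y ∈ range (n+2), ((y:ℝ))^2 *
        ∑ x ∈ range (n+1), muSeq M q r r' p u n x * transP M q r r' p u x y = _
    simp only [Finset.mul_sum]
    rw [Finset.sum_comm]
    refine Finset.sum_congr rfl fun x hx => ?_
    rw [Finset.mem_range] at hx
    have hsub : range (x+2) ⊆ range (n+2) := Finset.range_subset_range.mpr (by omega)
    have e : ∀ y ∈ range (n+2),
        (y:ℝ)^2 * (muSeq M q r r' p u n x * transP M q r r' p u x y)
          = muSeq M q r r' p u n x * (transP M q r r' p u x y * (y:ℝ)^2) :=
      fun y _ => by ring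
    trans ∑ y ∈ range (n+2),
        muSeq M q r r' p u n x * (transP M q r r' p u x y * (y:ℝ)^2)
    · exact Finset.sum_congr rfl e
    have hzz := Finset.sum_subset
      (f := fun y => muSeq M q r r' p u n x * (transP M q r r' p u x y * (y:ℝ)^2)) hsub
      (fun y _ hy => by
        rw [Finset.mem_range] at hy
        show muSeq M q r r' p u n x * (transP M q r r' p u x y * (y:ℝ)^2) = 0
        rw [transP_eq_zero_right hu (by omega)]
        ring)
    exact hzz.symm
  rw [step1]
  have hbd : ∀ x ∈ range (n+1),
      muSeq M q r r' p u n x *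
          (∑ y ∈ range (x+2), transP M q r r' p u x y * ((y:ℝ))^2)
        ≤ ((x:ℝ)^2) * muSeq M q r r' p u n x
          - 2 * ((M:ℝ) * (q * r + (1 - q) * r') - p) * ((x:ℝ) * muSeq M q r r' p u n x)
          + ((M:ℝ)^2 + 2*(M:ℝ) + 2*((M:ℝ) * (q * r + (1 - q) * r') - p)*(M:ℝ))
              * muSeq M q r r' p u n x := by
    intro x hx
    have hmu := muSeq_nonneg hq0 hq1 hr0 hr1 hr'0 hr'1 hp0 hp1 (M := M) (u := u) n x
    have hsq := transP_sq hq0 hq1 hr0 hr1 hr'0 hr'1 hp0 hp1 hu hM hstab x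
    calc muSeq M q r r' p u n x * _
        ≤ muSeq M q r r' p u n x *
            ((x:ℝ)^2 - 2 * ((M:ℝ) * (q * r + (1 - q) * r') - p) * (x:ℝ)
              + ((M:ℝ)^2 + 2*(M:ℝ) + 2*((M:ℝ) * (q * r + (1 - q) * r') - p)*(M:ℝ))) :=
          mul_le_mul_of_nonneg_left hsq hmu
      _ = _ := by ring
  refine le_trans (Finset.sum_le_sum hbd) ?_
  rw [Finset.sum_add_distrib, Finset.sum_sub_distrib, ← Finset.mul_sum, ← Finset.mul_sum]
  rw [muSeq_mass hu n]
  have e1 : ∑ x ∈ range (n+1), ((x:ℝ)^2) * muSeq M q r r' p u n x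
      = ∑ y ∈ range (n+1), ((y:ℝ))^2 * muSeq M q r r' p u n y := rfl
  rw [e1, mul_one]

include hq0 hq1 hr0 hr1 hr'0 hr'1 hp0 hp1 hu hM hstab in
lemma muSeq_moment_bound (N : ℕ) :
    2 * ((M:ℝ) * (q * r + (1 - q) * r') - p)
        * (∑ k ∈ range N, ∑ y ∈ range (k+1), (y:ℝ) * muSeq M q r r' p u k y)
      ≤ (N:ℝ) * ((M:ℝ)^2 + 2*(M:ℝ) + 2*((M:ℝ) * (q * r + (1 - q) * r') - p)*(M:ℝ)) := by
  have key : ∀ N : ℕ,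
      (∑ y ∈ range (N+1), ((y:ℝ))^2 * muSeq M q r r' p u N y)
        + 2 * ((M:ℝ) * (q * r + (1 - q) * r') - p)
            * (∑ k ∈ range N, ∑ y ∈ range (k+1), (y:ℝ) * muSeq M q r r' p u k y)
        ≤ (N:ℝ) * ((M:ℝ)^2 + 2*(M:ℝ) + 2*((M:ℝ) * (q * r + (1 - q) * r') - p)*(M:ℝ)) := by
    intro N
    induction N with
    | zero => simp [muSeq]
    | succ N ih =>
      have hrec := muSeq_sq_rec hq0 hq1 hr0 hr1 hr'0 hr'1 hp0 hp1 hu hM hstab N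
      have hsplit : ∑ k ∈ range (N+1), ∑ y ∈ range (k+1), (y:ℝ) * muSeq M q r r' p u k y
          = (∑ k ∈ range N, ∑ y ∈ range (k+1), (y:ℝ) * muSeq M q r r' p u k y)
            + ∑ y ∈ range (N+1), (y:ℝ) * muSeq M q r r' p u N y :=
        Finset.sum_range_succ _ N
      rw [hsplit]
      push_cast
      linarith [hrec, ih]
  have hN := key N
  have hpos : 0 ≤ ∑ y ∈ range (N+1), ((y:ℝ))^2 * muSeq M q r r' p u N y :=
    Finset.sum_nonneg fun y _ => mul_nonneg (by positivity)
      (muSeq_nonneg hq0 hq1 hr0 hr1 hr'0 hr'1 hp0 hp1 N y)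
  linarith

end MuSeq2

noncomputable def epsC (M : ℕ) (q r r' p : ℝ) : ℝ := (M:ℝ) * (q * r + (1 - q) * r') - p
noncomputable def CC (M : ℕ) (q r r' p : ℝ) : ℝ :=
  (M:ℝ)^2 + 2*(M:ℝ) + 2*(epsC M q r r' p)*(M:ℝ)
noncomputable def BB (M : ℕ) (q r r' p : ℝ) : ℝ := CC M q r r' p / (2 * epsC M q r r' p)

section APart

variable (hq0 : 0 ≤ q) (hq1 : q ≤ 1) (hr0 : 0 ≤ r) (hr1 : r ≤ 1)
  (hr'0 : 0 ≤ r') (hr'1 : r' ≤ 1) (hp0 : 0 ≤ p) (hp1 : p ≤ 1)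
  (hu : ∀ x, u x ≤ 1) (hM : 1 ≤ M)
  (hstab : p < (M : ℝ) * (q * r + (1 - q) * r'))

include hu in
lemma muSeq_step (k y : ℕ) :
    ∑ x ∈ range (y + M + 1), muSeq M q r r' p u k x * transP M q r r' p u x y
      = muSeq M q r r' p u (k+1) y := by
  have hR : muSeq M q r r' p u (k+1) y
      = ∑ x ∈ range (k+1), muSeq M q r r' p u k x * transP M q r r' p u x y := rfl
  set T := range (max (k+1) (y+M+1)) with hT
  have h1 : ∑ x ∈ range (y + M + 1), muSeq M q r r' p u k x * transP M q r r' p u x y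
      = ∑ x ∈ T, muSeq M q r r' p u k x * transP M q r r' p u x y := by
    apply Finset.sum_subset (Finset.range_subset_range.mpr (le_max_right _ _))
    intro x _ hx
    rw [Finset.mem_range, not_lt] at hx
    rw [transP_eq_zero_left (by omega)]
    ring
  have h2 : ∑ x ∈ range (k+1), muSeq M q r r' p u k x * transP M q r r' p u x y
      = ∑ x ∈ T, muSeq M q r r' p u k x * transP M q r r' p u x y := by
    apply Finset.sum_subset (Finset.range_subset_range.mpr (le_max_left _ _))
    intro x _ hx
    rw [Finset.mem_range, not_lt] at hx
    rw [muSeq_eq_zero hu k x (by omega)]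
    ring
  rw [h1, hR, h2]

include hu in
lemma A_mass (N : ℕ) :
    ∑ y ∈ range N, ∑ k ∈ range N, muSeq M q r r' p u k y = (N:ℝ) := by
  rw [Finset.sum_comm]
  have inner : ∀ k ∈ range N, ∑ y ∈ range N, muSeq M q r r' p u k y = 1 := by
    intro k hk
    rw [Finset.mem_range] at hk
    rw [← Finset.sum_subset (Finset.range_subset_range.mpr (by omega : k + 1 ≤ N))
      (fun y _ hy => by
        rw [Finset.mem_range, not_lt] at hy
        exact muSeq_eq_zero hu k y (by omega))]
    exact muSeq_mass hu k
  rw [Finset.sum_congr rfl inner]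
  simp

include hq0 hq1 hr0 hr1 hr'0 hr'1 hp0 hp1 hu hM hstab in
lemma A_moment (N : ℕ) :
    ∑ y ∈ range N, (y:ℝ) * ∑ k ∈ range N, muSeq M q r r' p u k y
      ≤ (N:ℝ) * BB M q r r' p := by
  have hε : 0 < epsC M q r r' p := by unfold epsC; linarith
  have swap : ∑ y ∈ range N, (y:ℝ) * ∑ k ∈ range N, muSeq M q r r' p u k y
      = ∑ k ∈ range N, ∑ y ∈ range (k+1), (y:ℝ) * muSeq M q r r' p u k y := by
    simp only [Finset.mul_sum]
    rw [Finset.sum_comm]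
    refine Finset.sum_congr rfl fun k hk => ?_
    rw [Finset.mem_range] at hk
    refine (Finset.sum_subset (Finset.range_subset_range.mpr (by omega : k + 1 ≤ N))
      (fun y _ hy => ?_)).symm
    rw [Finset.mem_range, not_lt] at hy
    rw [muSeq_eq_zero hu k y (by omega)]
    ring
  rw [swap]
  have hmb := muSeq_moment_bound hq0 hq1 hr0 hr1 hr'0 hr'1 hp0 hp1 hu hM hstab (M := M) N
  rw [show BB M q r r' p = CC M q r r' p / (2 * epsC M q r r' p) from rfl,
    ← mul_div_assoc, le_div_iff₀ (by linarith)]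
  unfold CC epsC at *
  nlinarith [hmb]

include hq0 hq1 hr0 hr1 hr'0 hr'1 hp0 hp1 hu hM hstab in
lemma A_lower (K N : ℕ) (hK : 1 ≤ K) :
    (N:ℝ) * (1 - BB M q r r' p / K)
      ≤ ∑ y ∈ range K, ∑ k ∈ range N, muSeq M q r r' p u k y := by
  have hε : 0 < epsC M q r r' p := by unfold epsC; linarith
  have hK0 : (0:ℝ) < (K:ℝ) := by exact_mod_cast hK
  set A : ℕ → ℝ := fun y => ∑ k ∈ range N, muSeq M q r r' p u k y with hA
  have hA0 : ∀ y, 0 ≤ A y := fun y => Finset.sum_nonneg fun k _ =>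
    muSeq_nonneg hq0 hq1 hr0 hr1 hr'0 hr'1 hp0 hp1 k y
  have hAz : ∀ y, N ≤ y → A y = 0 := by
    intro y hy
    exact Finset.sum_eq_zero fun k hk => muSeq_eq_zero hu k y
      (by rw [Finset.mem_range] at hk; omega)
  set T := range (max K N) with hT
  have hmass : ∑ y ∈ T, A y = (N:ℝ) := by
    rw [← Finset.sum_subset (Finset.range_subset_range.mpr (le_max_right K N))
      (fun y _ hy => hAz y (by rw [Finset.mem_range, not_lt] at hy; omega))]
    exact A_mass hu N
  have hmom : ∑ y ∈ T, (y:ℝ) * A y ≤ (N:ℝ) * BB M q r r' p := by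
    rw [← Finset.sum_subset (Finset.range_subset_range.mpr (le_max_right K N))
      (fun y _ hy => by
        rw [hAz y (by rw [Finset.mem_range, not_lt] at hy; omega)]; ring)]
    exact A_moment hq0 hq1 hr0 hr1 hr'0 hr'1 hp0 hp1 hu hM hstab N
  have hsdiff : ∑ y ∈ T \ range K, A y + ∑ y ∈ range K, A y = ∑ y ∈ T, A y :=
    Finset.sum_sdiff (Finset.range_subset_range.mpr (le_max_left K N))
  have htail : (K:ℝ) * ∑ y ∈ T \ range K, A y ≤ (N:ℝ) * BB M q r r' p := by
    rw [Finset.mul_sum]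
    refine le_trans (Finset.sum_le_sum fun y hy => ?_) (le_trans
      (Finset.sum_le_sum_of_subset_of_nonneg (Finset.sdiff_subset)
        (fun y _ _ => mul_nonneg (Nat.cast_nonneg y) (hA0 y))) hmom)
    rw [Finset.mem_sdiff] at hy
    have hy2 : K ≤ y := by
      have := hy.2
      rw [Finset.mem_range, not_lt] at this
      exact this
    have : (K:ℝ) ≤ (y:ℝ) := by exact_mod_cast hy2
    exact mul_le_mul_of_nonneg_right this (hA0 y)
  have h1 : ∑ y ∈ T \ range K, A y ≤ (N:ℝ) * BB M q r r' p / K := by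
    rw [le_div_iff₀ hK0]; linarith [htail]
  have h2 : ∑ y ∈ range K, A y = (N:ℝ) - ∑ y ∈ T \ range K, A y := by linarith [hsdiff, hmass]
  rw [h2]
  have : (N:ℝ) * (BB M q r r' p / K) = (N:ℝ) * BB M q r r' p / K := by ring
  linarith [h1]

end APart

set_option maxHeartbeats 2000000 in
/-- Foster–Lyapunov conditions for `θ(x) = x` under `p < M(qr + (1−q)r')`, and
the resulting positive recurrence (existence of a stationary distribution). -/
theorem foster_lyapunov_positive_recurrent
    (M : ℕ) (hM : 1 ≤ M)
    (q r r' p : ℝ) (hq0 : 0 ≤ q) (hq1 : q ≤ 1) (hr0 : 0 ≤ r) (hr1 : r ≤ 1)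
    (hr'0 : 0 ≤ r') (hr'1 : r' ≤ 1) (hp0 : 0 ≤ p) (hp1 : p ≤ 1)
    (hstab : p < (M : ℝ) * (q * r + (1 - q) * r'))
    (u : ℕ → ℕ) (hu : ∀ x, u x ≤ 1) :
    (∃ c : ℝ, ∀ x : ℕ, c ≤ (x : ℝ))
    ∧ (∀ x : ℕ, x < M → Summable (fun y : ℕ => transP M q r r' p u x y * (y : ℝ)))
    ∧ (∃ ε : ℝ, 0 < ε ∧ ∀ x : ℕ, M ≤ x →
        (∑' y : ℕ, transP M q r r' p u x y * ((y : ℝ) - (x : ℝ))) ≤ -ε)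
    ∧ (∃ π : ℕ → ℝ, (∀ y, 0 ≤ π y) ∧ (∑' y : ℕ, π y) = 1
        ∧ ∀ y : ℕ, (∑' x : ℕ, π x * transP M q r r' p u x y) = π y) := by
  have hε : 0 < epsC M q r r' p := by unfold epsC; linarith
  refine ⟨⟨0, fun x => Nat.cast_nonneg x⟩, ?_, ?_, ?_⟩
  · -- (ii) summability on the finite set
    intro x _
    apply summable_of_ne_finset_zero (s := range (x+2))
    intro y hy
    rw [Finset.mem_range, not_lt] at hy
    rw [transP_eq_zero_right hu (by omega)]
    ring
  · -- (iii) negative drift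
    refine ⟨epsC M q r r' p, hε, fun x hx => ?_⟩
    have htsum : ∑' y : ℕ, transP M q r r' p u x y * ((y:ℝ) - (x:ℝ))
        = ∑ y ∈ range (x+2), transP M q r r' p u x y * ((y:ℝ) - (x:ℝ)) := by
      apply tsum_eq_sum
      intro y hy
      rw [Finset.mem_range, not_lt] at hy
      rw [transP_eq_zero_right hu (by omega)]
      ring
    rw [htsum, transP_drift hu hM hx]
    have hux1 : ((u x : ℕ):ℝ) ≤ 1 := by exact_mod_cast hu x
    have hpu : p * (u x : ℝ) ≤ p := mul_le_of_le_one_right hp0 hux1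
    unfold epsC
    linarith
  · -- (iv) stationary distribution
    set F : Ultrafilter ℕ := Filter.hyperfilter ℕ with hF
    have hFat : (F : Filter ℕ) ≤ Filter.atTop := by
      rw [← Nat.cofinite_eq_atTop]
      exact Filter.hyperfilter_le_cofinite
    set a : ℕ → ℕ → ℝ :=
      fun N y => (∑ k ∈ range (N+1), muSeq M q r r' p u k y) / ((N:ℝ)+1) with ha
    have hden : ∀ N : ℕ, (0:ℝ) < (N:ℝ)+1 := fun N => by positivity
    have ha0 : ∀ N y, 0 ≤ a N y := fun N y => div_nonneg
      (Finset.sum_nonneg fun k _ => muSeq_nonneg hq0 hq1 hr0 hr1 hr'0 hr'1 hp0 hp1 k y)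
      (le_of_lt (hden N))
    have ha1 : ∀ N y, a N y ≤ 1 := by
      intro N y
      rw [ha]
      rw [div_le_one (hden N)]
      calc ∑ k ∈ range (N+1), muSeq M q r r' p u k y
          ≤ ∑ k ∈ range (N+1), 1 :=
            Finset.sum_le_sum fun k _ =>
              muSeq_le_one hq0 hq1 hr0 hr1 hr'0 hr'1 hp0 hp1 hu k y
        _ = ((N:ℝ)+1) := by simp
    have hlim : ∀ y, ∃ L, L ∈ Set.Icc (0:ℝ) 1 ∧
        Filter.Tendsto (fun N => a N y) F (nhds L) := by
      intro y
      have hmem : ∀ N, a N y ∈ Set.Icc (0:ℝ) 1 := fun N => ⟨ha0 N y, ha1 N y⟩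
      have hle : (Ultrafilter.map (fun N => a N y) F : Filter ℝ)
          ≤ Filter.principal (Set.Icc 0 1) := by
        rw [Ultrafilter.coe_map, Filter.le_principal_iff]
        exact Filter.mem_map.mpr (Filter.univ_mem' fun N => hmem N)
      obtain ⟨L, hL, hconv⟩ :=
        isCompact_Icc.ultrafilter_le_nhds (Ultrafilter.map (fun N => a N y) F) hle
      refine ⟨L, hL, ?_⟩
      rwa [Ultrafilter.coe_map] at hconv
    choose piF hpiIcc hpitend using hlim
    have hpi0 : ∀ y, 0 ≤ piF y := fun y => (hpiIcc y).1
    -- stationarity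
    have hstat : ∀ y, (∑' x : ℕ, piF x * transP M q r r' p u x y) = piF y := by
      intro y
      have hfin : (∑' x : ℕ, piF x * transP M q r r' p u x y)
          = ∑ x ∈ range (y+M+1), piF x * transP M q r r' p u x y := by
        apply tsum_eq_sum
        intro x hx
        rw [Finset.mem_range, not_lt] at hx
        rw [transP_eq_zero_left (by omega)]
        ring
      have hT1 : Filter.Tendsto
          (fun N => ∑ x ∈ range (y+M+1), a N x * transP M q r r' p u x y) F
          (nhds (∑ x ∈ range (y+M+1), piF x * transP M q r r' p u x y)) :=
        tendsto_finset_sum _ (fun x _ => (hpitend x).mul_const _)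
      have hid : ∀ N, ∑ x ∈ range (y+M+1), a N x * transP M q r r' p u x y
          = a N y + (muSeq M q r r' p u (N+1) y - muSeq M q r r' p u 0 y)/((N:ℝ)+1) := by
        intro N
        have e0 : ∑ x ∈ range (y+M+1), a N x * transP M q r r' p u x y
            = (∑ x ∈ range (y+M+1),
                (∑ k ∈ range (N+1), muSeq M q r r' p u k x) * transP M q r r' p u x y)
              / ((N:ℝ)+1) := by
          rw [Finset.sum_div]
          exact Finset.sum_congr rfl fun x _ => by rw [ha]; rw [div_mul_eq_mul_div]
        rw [e0]
        have e1 : ∑ x ∈ range (y+M+1),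
            (∑ k ∈ range (N+1), muSeq M q r r' p u k x) * transP M q r r' p u x y
            = ∑ k ∈ range (N+1), muSeq M q r r' p u (k+1) y := by
          simp only [Finset.sum_mul]
          rw [Finset.sum_comm]
          exact Finset.sum_congr rfl fun k _ => muSeq_step hu k y
        rw [e1]
        have e2 := Finset.sum_range_succ' (fun k => muSeq M q r r' p u k y) (N+1)
        have e3 := Finset.sum_range_succ (fun k => muSeq M q r r' p u k y) (N+1)
        have e4 : ∑ k ∈ range (N+1), muSeq M q r r' p u (k+1) y
            = (∑ k ∈ range (N+1), muSeq M q r r' p u k y)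
              + muSeq M q r r' p u (N+1) y - muSeq M q r r' p u 0 y := by
          linarith
        rw [e4, ha]
        have hne : ((N:ℝ)+1) ≠ 0 := ne_of_gt (hden N)
        field_simp
        ring
      have hsmall : Filter.Tendsto
          (fun N : ℕ => (muSeq M q r r' p u (N+1) y - muSeq M q r r' p u 0 y)/((N:ℝ)+1))
          Filter.atTop (nhds 0) := by
        apply squeeze_zero_norm ?_
          (tendsto_one_div_add_atTop_nhds_zero_nat : Filter.Tendsto (fun N : ℕ => 1/((N:ℝ)+1)) Filter.atTop (nhds 0))
        intro N
        have b1 := muSeq_le_one hq0 hq1 hr0 hr1 hr'0 hr'1 hp0 hp1 hu (M := M) (N+1) y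
        have b2 := muSeq_le_one hq0 hq1 hr0 hr1 hr'0 hr'1 hp0 hp1 hu (M := M) 0 y
        have b3 := muSeq_nonneg hq0 hq1 hr0 hr1 hr'0 hr'1 hp0 hp1 (M := M) (u := u) (N+1) y
        have b4 := muSeq_nonneg hq0 hq1 hr0 hr1 hr'0 hr'1 hp0 hp1 (M := M) (u := u) 0 y
        rw [Real.norm_eq_abs, abs_div, abs_of_pos (hden N)]
        have habs : |muSeq M q r r' p u (N+1) y - muSeq M q r r' p u 0 y| ≤ 1 :=
          abs_le.mpr ⟨by linarith, by linarith⟩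
        gcongr
      have hT2 : Filter.Tendsto
          (fun N => a N y + (muSeq M q r r' p u (N+1) y - muSeq M q r r' p u 0 y)/((N:ℝ)+1))
          F (nhds (piF y + 0)) :=
        (hpitend y).add (hsmall.mono_left hFat)
      rw [add_zero] at hT2
      have hT1' : Filter.Tendsto
          (fun N => a N y + (muSeq M q r r' p u (N+1) y - muSeq M q r r' p u 0 y)/((N:ℝ)+1))
          F (nhds (∑ x ∈ range (y+M+1), piF x * transP M q r r' p u x y)) := by
        simpa only [hid] using hT1
      rw [hfin]
      exact tendsto_nhds_unique hT1' hT2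
    -- partial sums of the Cesàro averages are at most 1
    have hble : ∀ K N, ∑ y ∈ range K, a N y ≤ 1 := by
      intro K N
      have hz : ∀ y, N+1 ≤ y → (∑ k ∈ range (N+1), muSeq M q r r' p u k y) = 0 :=
        fun y hy => Finset.sum_eq_zero fun k hk => muSeq_eq_zero hu k y
          (by rw [Finset.mem_range] at hk; omega)
      have hnn : ∀ y : ℕ, 0 ≤ ∑ k ∈ range (N+1), muSeq M q r r' p u k y := fun y =>
        Finset.sum_nonneg fun k _ => muSeq_nonneg hq0 hq1 hr0 hr1 hr'0 hr'1 hp0 hp1 k y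
      have key : ∑ y ∈ range K, ∑ k ∈ range (N+1), muSeq M q r r' p u k y ≤ ((N:ℝ)+1) := by
        calc ∑ y ∈ range K, ∑ k ∈ range (N+1), muSeq M q r r' p u k y
            ≤ ∑ y ∈ range (max K (N+1)), ∑ k ∈ range (N+1), muSeq M q r r' p u k y :=
              Finset.sum_le_sum_of_subset_of_nonneg
                (Finset.range_subset_range.mpr (le_max_left _ _)) (fun y _ _ => hnn y)
          _ = ∑ y ∈ range (N+1), ∑ k ∈ range (N+1), muSeq M q r r' p u k y := by
              refine (Finset.sum_subset (Finset.range_subset_range.mpr (le_max_right _ _))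
                fun y _ hy => ?_).symm
              rw [Finset.mem_range, not_lt] at hy
              exact hz y hy
          _ = ((N:ℝ)+1) := by
              have := A_mass hu (M := M) (q := q) (r := r) (r' := r') (p := p) (N+1)
              push_cast at this
              exact this
      show (∑ y ∈ range K, (∑ k ∈ range (N+1), muSeq M q r r' p u k y) / ((N:ℝ)+1)) ≤ 1
      rw [← Finset.sum_div, div_le_one (hden N)]
      exact key
    have hsumπle : ∀ K, ∑ y ∈ range K, piF y ≤ 1 := fun K =>
      le_of_tendsto (tendsto_finset_sum _ fun y _ => hpitend y)
        (Filter.Eventually.of_forall fun N => hble K N)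
    have hsummable : Summable piF := summable_of_sum_range_le hpi0 hsumπle
    have htle : (∑' y, piF y) ≤ 1 := hsummable.tsum_le_of_sum_range_le hsumπle
    have hlow : ∀ K : ℕ, 1 ≤ K → 1 - BB M q r r' p / K ≤ ∑ y ∈ range K, piF y := by
      intro K hK
      refine ge_of_tendsto (tendsto_finset_sum _ fun y _ => hpitend y)
        (Filter.Eventually.of_forall fun N => ?_)
      have hAl := A_lower hq0 hq1 hr0 hr1 hr'0 hr'1 hp0 hp1 hu hM hstab K (N+1) hK
      show 1 - BB M q r r' p / K
          ≤ ∑ y ∈ range K, (∑ k ∈ range (N+1), muSeq M q r r' p u k y) / ((N:ℝ)+1)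
      rw [← Finset.sum_div, le_div_iff₀ (hden N)]
      push_cast at hAl
      nlinarith [hAl]
    have hBpos : 0 ≤ BB M q r r' p := by
      have hM1 : (1:ℝ) ≤ (M:ℝ) := by exact_mod_cast hM
      apply div_nonneg _ (by unfold epsC at hε ⊢; linarith)
      unfold CC
      nlinarith [hε, hM1]
    have hge : (1:ℝ) ≤ ∑' y, piF y := by
      by_contra hlt
      push_neg at hlt
      obtain ⟨K, hKgt⟩ := exists_nat_gt (BB M q r r' p / (1 - ∑' y, piF y))
      have hKr : (0:ℝ) < (K:ℝ) :=
        lt_of_le_of_lt (div_nonneg hBpos (by linarith)) hKgt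
      have hK1 : 1 ≤ K := Nat.cast_pos.mp hKr
      have h1 := hlow K hK1
      have h2 : ∑ y ∈ range K, piF y ≤ ∑' y, piF y :=
        hsummable.sum_le_tsum (range K) (fun y _ => hpi0 y)
      rw [div_lt_iff₀ (by linarith : (0:ℝ) < 1 - ∑' y, piF y)] at hKgt
      have h3 : 1 - BB M q r r' p / K ≤ ∑' y, piF y := le_trans h1 h2
      have h4 : (1 - ∑' y, piF y) * K ≤ BB M q r r' p := by
        rw [← le_div_iff₀ hKr]
        linarith
      nlinarith [hKgt, h4]
    exact ⟨piF, hpi0, le_antisymm htle hge, hstat⟩
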